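/- arXiv:1912.11220 — 4 statements merged into one kernel-verified Lean document; each statement's English description precedes it below -/
import Mathlib

section
/- Let p be a prime with p ≡ 1 (mod 4), and let M be an even lattice of signature (n,2) whose level is exactly p. Then n ≡ 2 (mod 4). -/
open Matrix

namespace LatQ

variable {ι κ : Type*} [Fintype ι] [Fintype κ]

/-- The bilinear form on `ι → ℚ` given by the matrix `F`. -/
def bform (F : Matrix ι ι ℚ) (x y : ι → ℚ) : ℚ := x ⬝ᵥ F *ᵥ y

/-- A rational number is an integer. -/
def isIntQ (q : ℚ) : Prop := ∃ m : ℤ, q = (m : ℚ)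

lemma isIntQ_add {a b : ℚ} (ha : isIntQ a) (hb : isIntQ b) : isIntQ (a + b) := by
  obtain ⟨m, rfl⟩ := ha; obtain ⟨n, rfl⟩ := hb; exact ⟨m + n, by push_cast; ring⟩

lemma bform_add_left (F : Matrix ι ι ℚ) (a b y : ι → ℚ) :
    bform F (a + b) y = bform F a y + bform F b y := add_dotProduct a b _

lemma bform_zero_left (F : Matrix ι ι ℚ) (y : ι → ℚ) : bform F 0 y = 0 := zero_dotProduct _

lemma bform_zsmul_left (F : Matrix ι ι ℚ) (c : ℤ) (x y : ι → ℚ) :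
    bform F (c • x) y = (c : ℚ) * bform F x y := by
  unfold bform
  rw [← Int.cast_smul_eq_zsmul ℚ c x, smul_dotProduct, smul_eq_mul]

/-- The dual lattice of `L` with respect to the form `F`, inside the ambient space `ι → ℚ`. -/
def dual (F : Matrix ι ι ℚ) (L : Submodule ℤ (ι → ℚ)) : Submodule ℤ (ι → ℚ) where
  carrier := {x | ∀ y ∈ L, isIntQ (bform F x y)}
  zero_mem' := fun y _ => ⟨0, by simp [bform_zero_left]⟩
  add_mem' := fun ha hb y hy => by
    have := isIntQ_add (ha y hy) (hb y hy)
    rwa [← bform_add_left] at this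
  smul_mem' := fun c x hx y hy => by
    obtain ⟨m, hm⟩ := hx y hy
    exact ⟨c * m, by rw [bform_zsmul_left, hm]; push_cast; ring⟩

/-- The standard lattice `ℤ^ι` inside `ℚ^ι`. -/
def stdLat (ι : Type*) : Submodule ℤ (ι → ℚ) where
  carrier := {x | ∀ i, isIntQ (x i)}
  zero_mem' := fun i => ⟨0, by simp⟩
  add_mem' := fun ha hb i => isIntQ_add (ha i) (hb i)
  smul_mem' := fun c x hx i => by
    obtain ⟨m, hm⟩ := hx i
    exact ⟨c * m, by rw [Pi.smul_apply, hm, zsmul_eq_mul]; push_cast; ring⟩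

/-- `L` is an even lattice (of full rank) in `(ι → ℚ, bform F)`. -/
structure IsEvenLattice [DecidableEq ι] (F : Matrix ι ι ℚ) (L : Submodule ℤ (ι → ℚ)) : Prop where
  fg : L.FG
  spans : Submodule.span ℚ (L : Set (ι → ℚ)) = ⊤
  symm : F.IsSymm
  nondeg : F.det ≠ 0
  integral : ∀ x ∈ L, ∀ y ∈ L, isIntQ (bform F x y)
  even : ∀ x ∈ L, ∃ m : ℤ, bform F x x = 2 * m

/-- The real quadratic form of `F` diagonalizes with `bp` positive and `bm` negative entries. -/
def HasSignature [DecidableEq ι] (F : Matrix ι ι ℚ) (bp bm : ℕ) : Prop :=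
  ∃ P : Matrix ι ι ℝ, IsUnit P.det ∧ (Pᵀ * F.map ((↑) : ℚ → ℝ) * P).IsDiag ∧
    Nat.card {i : ι // 0 < (Pᵀ * F.map ((↑) : ℚ → ℝ) * P) i i} = bp ∧
    Nat.card {i : ι // (Pᵀ * F.map ((↑) : ℚ → ℝ) * P) i i < 0} = bm

/-- `N` is the level of the even lattice `L`: the smallest positive integer with
`N·(x,x) ∈ 2ℤ` for all `x` in the dual lattice. -/
def HasLevel (F : Matrix ι ι ℚ) (L : Submodule ℤ (ι → ℚ)) (N : ℕ) : Prop :=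
  0 < N ∧ (∀ x ∈ dual F L, ∃ m : ℤ, (N : ℚ) * bform F x x = 2 * m) ∧
    ∀ N' : ℕ, 0 < N' → (∀ x ∈ dual F L, ∃ m : ℤ, (N' : ℚ) * bform F x x = 2 * m) → N ≤ N'

/-- The order of the discriminant group `L^∨/L`. -/
noncomputable def discCard (F : Matrix ι ι ℚ) (L : Submodule ℤ (ι → ℚ)) : ℕ :=
  Nat.card ((↥(dual F L)) ⧸ (Submodule.comap (dual F L).subtype L))

/-- Two lattices (with ambient forms) are isometric. -/
def Isometric (F : Matrix ι ι ℚ) (L : Submodule ℤ (ι → ℚ))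
    (F' : Matrix κ κ ℚ) (L' : Submodule ℤ (κ → ℚ)) : Prop :=
  ∃ e : L ≃ₗ[ℤ] L', ∀ x y : L,
    bform F' ((e x : κ → ℚ)) ((e y : κ → ℚ)) = bform F (x : ι → ℚ) (y : ι → ℚ)

/-- The isometry group `O(L)` of the lattice `L` with form `F`. -/
def OGroup (F : Matrix ι ι ℚ) (L : Submodule ℤ (ι → ℚ)) : Subgroup (↥L ≃ₗ[ℤ] ↥L) where
  carrier := {e | ∀ x y : L,
    bform F ((e x : ι → ℚ)) ((e y : ι → ℚ)) = bform F (x : ι → ℚ) (y : ι → ℚ)}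
  one_mem' := fun x y => rfl
  mul_mem' := fun {a b} ha hb x y => by
    have h1 : ∀ z : L, (a * b) z = a (b z) := fun z => rfl
    rw [h1, h1, ha, hb]
  inv_mem' := fun {a} ha x y => by
    have h := ha (a⁻¹ x) (a⁻¹ y)
    have hx : a (a⁻¹ x) = x := a.apply_symm_apply x
    have hy : a (a⁻¹ y) = y := a.apply_symm_apply y
    rw [hx, hy] at h
    exact h.symm

/-- Orthogonal direct sum of forms. -/
def oplusF (F : Matrix ι ι ℚ) (G : Matrix κ κ ℚ) : Matrix (ι ⊕ κ) (ι ⊕ κ) ℚ :=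
  Matrix.fromBlocks F 0 0 G

/-- Orthogonal direct sum of lattices. -/
def oplusL (L : Submodule ℤ (ι → ℚ)) (M : Submodule ℤ (κ → ℚ)) :
    Submodule ℤ (ι ⊕ κ → ℚ) where
  carrier := {x | (fun i => x (Sum.inl i)) ∈ L ∧ (fun j => x (Sum.inr j)) ∈ M}
  zero_mem' := ⟨L.zero_mem, M.zero_mem⟩
  add_mem' := fun ha hb => ⟨L.add_mem ha.1 hb.1, M.add_mem ha.2 hb.2⟩
  smul_mem' := fun c _ hx => ⟨L.smul_mem c hx.1, M.smul_mem c hx.2⟩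


end LatQ

namespace LatQ2Aux

/-- Key lemma: an even symmetric integer matrix with odd determinant has even
size `2s` and determinant `≡ (-1)^s (mod 4)`. -/
lemma even_symm_det_mod_four : ∀ m : ℕ, ∀ G : Matrix (Fin m) (Fin m) ℤ, G.IsSymm →
    (∀ i, 2 ∣ G i i) → ¬ (2 : ℤ) ∣ G.det →
    ∃ s : ℕ, m = 2 * s ∧ G.det ≡ (-1) ^ s [ZMOD 4] := by
  intro m
  induction m using Nat.strong_induction_on with
  | _ m IH =>
  intro G hsymm hdiag hodd
  rcases Nat.eq_zero_or_pos m with h0 | hpos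
  · subst h0
    refine ⟨0, rfl, ?_⟩
    rw [Matrix.det_fin_zero]
    decide
  -- find an odd off-diagonal entry
  have hexist : ∃ i j : Fin m, i ≠ j ∧ ¬ (2:ℤ) ∣ G i j := by
    by_contra hc
    push_neg at hc
    have hall : ∀ i j : Fin m, 2 ∣ G i j := by
      intro i j
      by_cases hij : i = j
      · subst hij; exact hdiag i
      · exact hc i j hij
    apply hodd
    have hG2 : G = (2:ℤ) • (Matrix.of fun i j => G i j / 2) := by
      ext i j
      simp only [Matrix.smul_apply, Matrix.of_apply, smul_eq_mul]
      exact (Int.mul_ediv_cancel' (hall i j)).symm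
    rw [hG2, Matrix.det_smul]
    simp only [Fintype.card_fin]
    exact Dvd.dvd.mul_right (dvd_pow_self 2 hpos.ne') _
  obtain ⟨i, j, hij, hoddij⟩ := hexist
  have hm2 : 2 ≤ m := by
    have hv : (i : ℕ) ≠ (j : ℕ) := fun h => hij (Fin.ext h)
    have := i.isLt; have := j.isLt
    omega
  set m' := m - 2 with hm'
  have hmeq : 2 + m' = m := by omega
  let e₀ : Fin 2 ⊕ Fin m' ≃ Fin m := finSumFinEquiv.trans (finCongr hmeq)
  let σ₁ : Fin 2 ⊕ Fin m' ≃ Fin m := e₀.trans (Equiv.swap (e₀ (Sum.inl 0)) i)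
  have hσ₁0 : σ₁ (Sum.inl 0) = i := by
    simp [σ₁, Equiv.swap_apply_left]
  let j₁ : Fin m := σ₁ (Sum.inl 1)
  have hj₁i : j₁ ≠ i := by
    rw [← hσ₁0]
    intro h
    have := σ₁.injective h
    simp at this
  let σ : Fin 2 ⊕ Fin m' ≃ Fin m := σ₁.trans (Equiv.swap j₁ j)
  have hσ0 : σ (Sum.inl 0) = i := by
    simp only [σ, Equiv.trans_apply, hσ₁0]
    exact Equiv.swap_apply_of_ne_of_ne hj₁i.symm hij
  have hσ1 : σ (Sum.inl 1) = j := by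
    simp only [σ, Equiv.trans_apply]
    exact Equiv.swap_apply_left j₁ j
  set G' : Matrix (Fin 2 ⊕ Fin m') (Fin 2 ⊕ Fin m') ℤ := G.submatrix σ σ with hG'
  have hdetG' : G'.det = G.det := Matrix.det_submatrix_equiv_self σ G
  have hsymm' : G'.IsSymm := by
    unfold Matrix.IsSymm
    rw [hG', Matrix.transpose_submatrix, hsymm.eq]
  have happ' : ∀ a b, G' b a = G' a b := fun a b => hsymm'.apply a b
  set Bz := G'.toBlocks₁₁ with hBz
  set Cz := G'.toBlocks₁₂ with hCz
  set Clz := G'.toBlocks₂₁ with hClz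
  set Dz := G'.toBlocks₂₂ with hDz
  have hCl : ∀ k i, Clz k i = Cz i k := fun k i => happ' (Sum.inl i) (Sum.inr k)
  have hBsymm : ∀ a b, Bz b a = Bz a b := fun a b => happ' (Sum.inl a) (Sum.inl b)
  have hDsymm : ∀ a b, Dz b a = Dz a b := fun a b => happ' (Sum.inr a) (Sum.inr b)
  have hB00 : 2 ∣ Bz 0 0 := hdiag _
  have hB11 : 2 ∣ Bz 1 1 := hdiag _
  have hDkk : ∀ k, 2 ∣ Dz k k := fun k => hdiag _
  have hb : Bz 0 1 = G i j := by
    show G' (Sum.inl 0) (Sum.inl 1) = G i j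
    rw [hG']; simp [Matrix.submatrix_apply, hσ0, hσ1]
  have hboddB : ¬ (2:ℤ) ∣ Bz 0 1 := hb ▸ hoddij
  have hdetB : Bz.det = Bz 0 0 * Bz 1 1 - Bz 0 1 * Bz 0 1 := by
    rw [Matrix.det_fin_two, hBsymm 0 1]
  have hdetBodd : ¬ (2:ℤ) ∣ Bz.det := by
    rw [hdetB]
    obtain ⟨u, hu⟩ := hB00
    intro ⟨v, hv⟩
    rcases Int.even_or_odd (Bz 0 1) with he | ho
    · exact hboddB he.two_dvd
    · obtain ⟨t, ht⟩ := ho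
      have h2 : Bz 0 0 * Bz 1 1 = 2 * (u * Bz 1 1) := by rw [hu]; ring
      have h3 : Bz 0 1 * Bz 0 1 = 4 * (t * t + t) + 1 := by rw [ht]; ring
      omega
  have hdetBmod : Bz.det ≡ -1 [ZMOD 4] := by
    rw [Int.ModEq]
    obtain ⟨u, hu⟩ := hB00
    obtain ⟨w, hw⟩ := hB11
    have hbodd : ∃ t, Bz 0 1 = 2 * t + 1 := by
      rcases Int.even_or_odd (Bz 0 1) with he | ⟨t, ht⟩
      · exact absurd he.two_dvd hboddB
      · exact ⟨t, ht⟩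
    obtain ⟨t, ht⟩ := hbodd
    have h2 : Bz.det = 4 * (u * w - (t * t + t)) - 1 := by
      rw [hdetB, hu, hw, ht]; ring
    omega
  set Sz : Matrix (Fin m') (Fin m') ℤ := Bz.det • Dz - Clz * Bz.adjugate * Cz with hSz
  -- transpose facts
  have hBzT : Bzᵀ = Bz := by ext a b; rw [Matrix.transpose_apply]; exact hBsymm a b
  have hDzT : Dzᵀ = Dz := by ext a b; rw [Matrix.transpose_apply]; exact hDsymm a b
  have hCzT : Czᵀ = Clz := by ext a b; rw [Matrix.transpose_apply]; exact (hCl a b).symm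
  have hClzT : Clzᵀ = Cz := by ext a b; rw [Matrix.transpose_apply]; exact hCl b a
  have hSsymm : Sz.IsSymm := by
    unfold Matrix.IsSymm
    rw [hSz, Matrix.transpose_sub, Matrix.transpose_smul, hDzT, Matrix.transpose_mul,
      Matrix.transpose_mul, hCzT, Matrix.adjugate_transpose, hBzT, ← Matrix.mul_assoc, hClzT]
  -- diagonal of Sz is even
  have hSdiag : ∀ k, 2 ∣ Sz k k := by
    intro k
    obtain ⟨u, hu⟩ := hB00
    obtain ⟨w, hw⟩ := hB11
    obtain ⟨d, hd⟩ := hDkk k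
    have hadj := Matrix.adjugate_fin_two Bz
    have hentry : (Clz * Bz.adjugate * Cz) k k =
        Cz 0 k * ((Bz 1 1 * Cz 0 k) + (-(Bz 0 1) * Cz 1 k)) +
        Cz 1 k * ((-(Bz 1 0) * Cz 0 k) + (Bz 0 0 * Cz 1 k)) := by
      have e1 : (Clz * Bz.adjugate * Cz) k k =
          Clz k 0 * ((Bz.adjugate) 0 0 * Cz 0 k + (Bz.adjugate) 0 1 * Cz 1 k) +
          Clz k 1 * ((Bz.adjugate) 1 0 * Cz 0 k + (Bz.adjugate) 1 1 * Cz 1 k) := by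
        rw [Matrix.mul_assoc, Matrix.mul_apply, Fin.sum_univ_two,
          Matrix.mul_apply, Fin.sum_univ_two, Matrix.mul_apply, Fin.sum_univ_two]
      rw [e1, hCl k 0, hCl k 1, hadj]
      norm_num
    refine ⟨Bz.det * d - (w * Cz 0 k * Cz 0 k - Bz 0 1 * Cz 0 k * Cz 1 k
        + u * Cz 1 k * Cz 1 k), ?_⟩
    rw [hSz]
    simp only [Matrix.sub_apply, Matrix.smul_apply, smul_eq_mul]
    rw [hentry, hd, hBsymm 0 1, hu, hw]
    ring
  -- the block determinant identity, entirely over ℤ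
  have hGblocks : G' = Matrix.fromBlocks Bz Cz Clz Dz := (Matrix.fromBlocks_toBlocks G').symm
  have hdetId : G.det * Bz.det * Bz.det ^ m' = Bz.det ^ 2 * Sz.det := by
    have e1 : Bz * Bz.adjugate + Cz * (0 : Matrix (Fin m') (Fin 2) ℤ) = Bz.det • (1 : Matrix (Fin 2) (Fin 2) ℤ) := by
      rw [Matrix.mul_adjugate, Matrix.mul_zero, add_zero]
    have e2 : Bz * -(Bz.adjugate * Cz) + Cz * (Bz.det • (1 : Matrix (Fin m') (Fin m') ℤ)) =
        0 := by
      rw [Matrix.mul_neg, ← Matrix.mul_assoc, Matrix.mul_adjugate, Matrix.mul_smul,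
        Matrix.mul_one, Matrix.smul_mul, Matrix.one_mul]
      exact neg_add_cancel _
    have e3 : Clz * Bz.adjugate + Dz * (0 : Matrix (Fin m') (Fin 2) ℤ) = Clz * Bz.adjugate := by
      rw [Matrix.mul_zero, add_zero]
    have e4 : Clz * -(Bz.adjugate * Cz) + Dz * (Bz.det • (1 : Matrix (Fin m') (Fin m') ℤ)) =
        Sz := by
      rw [hSz, Matrix.mul_neg, ← Matrix.mul_assoc, Matrix.mul_smul, Matrix.mul_one]
      rw [neg_add_eq_sub]
    have hT : G' * Matrix.fromBlocks Bz.adjugate (-(Bz.adjugate * Cz)) 0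
        (Bz.det • (1 : Matrix (Fin m') (Fin m') ℤ)) =
        Matrix.fromBlocks (Bz.det • 1) 0 (Clz * Bz.adjugate) Sz := by
      rw [hGblocks, Matrix.fromBlocks_multiply, e1, e2, e3, e4]
    have hdT := congrArg Matrix.det hT
    rw [Matrix.det_mul, Matrix.det_fromBlocks_zero₂₁, Matrix.det_fromBlocks_zero₁₂,
      Matrix.det_adjugate, Matrix.det_smul, Matrix.det_smul, Matrix.det_one, Matrix.det_one,
      hdetG'] at hdT
    simp only [Fintype.card_fin, mul_one] at hdT
    norm_num at hdT
    linear_combination hdT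
  have hSodd : ¬ (2:ℤ) ∣ Sz.det := by
    intro hdvd
    have h1 : (2:ℤ) ∣ G.det * Bz.det * Bz.det ^ m' := by
      rw [hdetId]; exact Dvd.dvd.mul_left hdvd _
    rcases (Int.prime_two.dvd_mul).mp h1 with h | h
    · rcases (Int.prime_two.dvd_mul).mp h with h' | h'
      · exact hodd h'
      · exact hdetBodd h'
    · exact hdetBodd (Int.prime_two.dvd_of_dvd_pow h)
  obtain ⟨s', hs', hmod'⟩ := IH m' (by omega) Sz hSsymm hSdiag hSodd
  refine ⟨s' + 1, by omega, ?_⟩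
  -- mod 4 arithmetic
  have h1 : G.det * Bz.det * Bz.det ^ m' ≡ G.det * -1 * (-1) ^ m' [ZMOD 4] :=
    ((Int.ModEq.refl G.det).mul hdetBmod).mul (hdetBmod.pow m')
  have h2 : Bz.det ^ 2 * Sz.det ≡ (-1) ^ 2 * (-1) ^ s' [ZMOD 4] :=
    (hdetBmod.pow 2).mul hmod'
  have h3 : G.det * -1 * (-1) ^ m' ≡ (-1) ^ 2 * (-1) ^ s' [ZMOD 4] :=
    h1.symm.trans (hdetId ▸ h2)
  have hm'eq : (-1 : ℤ) ^ m' = 1 := by rw [hs', pow_mul]; norm_num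
  rw [hm'eq] at h3
  calc G.det = G.det * -1 * 1 * -1 := by ring
  _ ≡ (-1) ^ 2 * (-1) ^ s' * -1 [ZMOD 4] := h3.mul_right _
  _ = (-1) ^ (s' + 1) := by rw [pow_succ]; ring

/-- Reindexed version for an arbitrary finite index type. -/
lemma even_symm_det_mod_four' {ι : Type*} [Fintype ι] [DecidableEq ι]
    (G : Matrix ι ι ℤ) (hs : G.IsSymm) (hd : ∀ i, 2 ∣ G i i) (ho : ¬ (2:ℤ) ∣ G.det) :
    ∃ s : ℕ, Fintype.card ι = 2 * s ∧ G.det ≡ (-1) ^ s [ZMOD 4] := by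
  classical
  let e := Fintype.equivFin ι
  let G' := G.submatrix ⇑e.symm ⇑e.symm
  have hdet : G'.det = G.det := Matrix.det_submatrix_equiv_self e.symm G
  have hs' : G'.IsSymm := by
    unfold Matrix.IsSymm
    show (G.submatrix ⇑e.symm ⇑e.symm)ᵀ = G.submatrix ⇑e.symm ⇑e.symm
    rw [Matrix.transpose_submatrix, hs.eq]
  have hd' : ∀ i, 2 ∣ G' i i := fun i => hd _
  have ho' : ¬ (2:ℤ) ∣ G'.det := by rw [hdet]; exact ho
  obtain ⟨s, hms, hmod⟩ := even_symm_det_mod_four (Fintype.card ι) G' hs' hd' ho'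
  exact ⟨s, hms, hdet ▸ hmod⟩

end LatQ2Aux

namespace LatQ

lemma dual_mem {ι : Type*} [Fintype ι] {F : Matrix ι ι ℚ} {L : Submodule ℤ (ι → ℚ)}
    (x : ι → ℚ) : x ∈ dual F L ↔ ∀ y ∈ L, isIntQ (bform F x y) := Iff.rfl

variable {ι : Type*} [Fintype ι]

lemma sig_facts [DecidableEq ι] {F : Matrix ι ι ℚ} {n : ℕ} (hFdet : F.det ≠ 0)
    (hsig : HasSignature F n 2) : Fintype.card ι = n + 2 ∧ 0 < F.det := by
  classical
  obtain ⟨P, hP, hdiag, hpos, hneg⟩ := hsig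
  set D := Pᵀ * F.map ((↑) : ℚ → ℝ) * P with hD
  have hFR : (F.map ((↑) : ℚ → ℝ)).det = (F.det : ℝ) := by
    have := RingHom.map_det (Rat.castHom ℝ) F
    simpa [RingHom.mapMatrix_apply] using this.symm
  have hPne : P.det ≠ 0 := hP.ne_zero
  have hdetD : D.det = P.det ^ 2 * (F.det : ℝ) := by
    rw [hD, Matrix.det_mul, Matrix.det_mul, Matrix.det_transpose, hFR]; ring
  have hDdetne : D.det ≠ 0 := by
    rw [hdetD]
    exact mul_ne_zero (pow_ne_zero 2 hPne) (by exact_mod_cast hFdet)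
  have hdiagD : Matrix.diagonal (fun i => D i i) = D := hdiag.diagonal_diag
  have hprod : D.det = ∏ i, D i i := by
    conv_lhs => rw [← hdiagD]
    rw [Matrix.det_diagonal]
  have hne : ∀ i : ι, D i i ≠ 0 := by
    have := hDdetne
    rw [hprod] at this
    intro i hi
    exact this (Finset.prod_eq_zero (Finset.mem_univ i) hi)
  -- counting
  have hcount : Fintype.card ι = n + 2 := by
    have h1 : Nat.card {i : ι // 0 < D i i} = (Finset.univ.filter (fun i => 0 < D i i)).card := by
      rw [Nat.card_eq_fintype_card, Fintype.card_subtype]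
    have h2 : Nat.card {i : ι // D i i < 0} = (Finset.univ.filter (fun i => D i i < 0)).card := by
      rw [Nat.card_eq_fintype_card, Fintype.card_subtype]
    have h3 : (Finset.univ.filter (fun i => D i i < 0)) =
        (Finset.univ.filter (fun i => ¬ 0 < D i i)) := by
      apply Finset.filter_congr
      intro i _
      constructor
      · exact fun h => not_lt.mpr h.le
      · intro h
        rcases lt_or_gt_of_ne (hne i) with h' | h'
        · exact h'
        · exact absurd h' h
    have h4 := Finset.card_filter_add_card_filter_not (s := Finset.univ)
      (p := fun i => 0 < D i i)
    rw [← hpos, ← hneg, h1, h2, h3, Finset.card_univ] at *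
    omega
  refine ⟨hcount, ?_⟩
  -- positivity of the determinant
  have hsplit : ∏ i, D i i =
      (∏ i ∈ Finset.univ.filter (fun i => 0 < D i i), D i i) *
      (∏ i ∈ Finset.univ.filter (fun i => ¬ 0 < D i i), D i i) :=
    (Finset.prod_filter_mul_prod_filter_not Finset.univ _ _).symm
  have hnegset : ∀ i ∈ Finset.univ.filter (fun i => ¬ 0 < D i i), D i i < 0 := by
    intro i hi
    rcases lt_or_gt_of_ne (hne i) with h' | h'
    · exact h'
    · exact absurd h' (Finset.mem_filter.mp hi).2
  have hcard2 : (Finset.univ.filter (fun i => ¬ 0 < D i i)).card = 2 := by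
    have h2 : Nat.card {i : ι // D i i < 0} = (Finset.univ.filter (fun i => D i i < 0)).card := by
      rw [Nat.card_eq_fintype_card, Fintype.card_subtype]
    have h3 : (Finset.univ.filter (fun i => D i i < 0)) =
        (Finset.univ.filter (fun i => ¬ 0 < D i i)) := by
      apply Finset.filter_congr
      intro i _
      constructor
      · exact fun h => not_lt.mpr h.le
      · intro h
        rcases lt_or_gt_of_ne (hne i) with h' | h'
        · exact h'
        · exact absurd h' h
    rw [← h3, ← h2, hneg]
  have hprodneg : (0:ℝ) < ∏ i ∈ Finset.univ.filter (fun i => ¬ 0 < D i i), D i i := by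
    have : ∏ i ∈ Finset.univ.filter (fun i => ¬ 0 < D i i), D i i =
        (-1)^(Finset.univ.filter (fun i => ¬ 0 < D i i)).card *
        ∏ i ∈ Finset.univ.filter (fun i => ¬ 0 < D i i), (- D i i) := by
      rw [← Finset.prod_const, ← Finset.prod_mul_distrib]
      exact Finset.prod_congr rfl (fun i _ => by ring)
    rw [this, hcard2]
    have h5 : (0:ℝ) < ∏ i ∈ Finset.univ.filter (fun i => ¬ 0 < D i i), (- D i i) :=
      Finset.prod_pos (fun i hi => by linarith [hnegset i hi])
    calc (0:ℝ) < ∏ i ∈ Finset.univ.filter (fun i => ¬ 0 < D i i), (- D i i) := h5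
    _ = (-1)^2 * ∏ i ∈ Finset.univ.filter (fun i => ¬ 0 < D i i), (- D i i) := by norm_num
  have hprodpos : (0:ℝ) < ∏ i ∈ Finset.univ.filter (fun i => 0 < D i i), D i i :=
    Finset.prod_pos (fun i hi => (Finset.mem_filter.mp hi).2)
  have hDpos : 0 < D.det := by
    rw [hprod, hsplit]
    exact mul_pos hprodpos hprodneg
  have : (0:ℝ) < (F.det : ℝ) := by
    rw [hdetD] at hDpos
    have hsq : 0 < P.det ^ 2 := by positivity
    nlinarith
  exact_mod_cast this

lemma bform_comm {F : Matrix ι ι ℚ} (hF : F.IsSymm) (x y : ι → ℚ) :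
    bform F x y = bform F y x := by
  unfold bform
  rw [Matrix.dotProduct_mulVec, dotProduct_comm, ← Matrix.mulVec_transpose, hF.eq]

lemma bform_add_right (F : Matrix ι ι ℚ) (x a b : ι → ℚ) :
    bform F x (a + b) = bform F x a + bform F x b := by
  unfold bform
  rw [Matrix.mulVec_add, dotProduct_add]

lemma gram_det_dvd [DecidableEq ι] {F : Matrix ι ι ℚ} {L : Submodule ℤ (ι → ℚ)}
    (hL : IsEvenLattice F L) (hFpos : 0 < F.det) (N : ℕ)
    (hN : ∀ x ∈ dual F L, ∃ m : ℤ, (N : ℚ) * bform F x x = 2 * m) :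
    ∃ g : Matrix ι ι ℤ, g.IsSymm ∧ (∀ i, 2 ∣ g i i) ∧ 0 < g.det ∧
      g.det ∣ (N : ℤ) ^ (Fintype.card ι) := by
  classical
  -- ## Step 1: a ℤ-basis of L which is a ℚ-basis of the ambient space
  haveI : Module.Finite ℤ L := Module.Finite.iff_fg.mpr hL.fg
  haveI : Module.Free ℤ L := Module.free_of_finite_type_torsion_free'
  set κ := Module.Free.ChooseBasisIndex ℤ L with hκ
  let b : Module.Basis κ ℤ L := Module.Free.chooseBasis ℤ L
  let v : κ → (ι → ℚ) := fun k => (b k : ι → ℚ)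
  have hvmem : ∀ k, v k ∈ L := fun k => (b k).2
  have hli : LinearIndependent ℚ v := by
    rw [← LinearIndependent.iff_fractionRing ℤ ℚ]
    exact b.linearIndependent.map' L.subtype (Submodule.ker_subtype L)
  have hspanv : Submodule.span ℤ (Set.range v) = L := by
    have h1 := congrArg (Submodule.map L.subtype) b.span_eq
    rw [Submodule.map_span, Submodule.map_top, Submodule.range_subtype] at h1
    rw [← h1]
    congr 1
    rw [← Set.range_comp]
    rfl
  have hspanQ : Submodule.span ℚ (Set.range v) = ⊤ := by
    have := Submodule.span_span_of_tower (R := ℤ) (S := ℚ) (s := Set.range v)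
    rw [hspanv] at this
    rw [← this, hL.spans]
  let bQ : Module.Basis κ ℚ (ι → ℚ) := Module.Basis.mk hli (le_of_eq hspanQ.symm)
  have hcard : Fintype.card κ = Fintype.card ι := by
    rw [← Module.finrank_eq_card_basis bQ, Module.finrank_pi]
  let e : κ ≃ ι := Fintype.equivOfCardEq hcard
  let w : ι → (ι → ℚ) := fun l => v (e.symm l)
  have hw : ∀ l, w l ∈ L := fun l => hvmem _
  let wQ : Module.Basis ι ℚ (ι → ℚ) := bQ.reindex e
  have hwQ : ∀ l, wQ l = w l := by
    intro l
    rw [Module.Basis.reindex_apply, Module.Basis.coe_mk]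
  -- ## Step 2: the matrix of basis vectors and the Gram matrix
  let B : Matrix ι ι ℚ := Matrix.of fun t l => w l t
  have hBw : ∀ l, B *ᵥ Pi.single l 1 = w l := by
    intro l; ext t
    simp [B, Matrix.mulVec_single]
  have hBdet : B.det ≠ 0 := by
    have hBtm : B = (Pi.basisFun ℚ ι).toMatrix (fun l => wQ l) := by
      ext t l
      rw [Module.Basis.toMatrix_apply, Pi.basisFun_repr, hwQ]
      rfl
    haveI := Module.Basis.invertibleToMatrix (Pi.basisFun ℚ ι) wQ
    have : IsUnit ((Pi.basisFun ℚ ι).toMatrix (fun l => wQ l)).det := by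
      exact Matrix.isUnit_det_of_invertible _
    rw [hBtm]
    exact this.ne_zero
  set GQ : Matrix ι ι ℚ := Bᵀ * F * B with hGQdef
  have haux : ∀ (M : Matrix ι ι ℚ) (u z : ι → ℚ), u ⬝ᵥ (M *ᵥ z) = (Mᵀ *ᵥ u) ⬝ᵥ z := by
    intro M u z
    rw [Matrix.dotProduct_mulVec, ← Matrix.mulVec_transpose]
  have hbf : ∀ c d : ι → ℚ, bform F (B *ᵥ c) (B *ᵥ d) = c ⬝ᵥ (GQ *ᵥ d) := by
    intro c d
    calc bform F (B *ᵥ c) (B *ᵥ d) = (B *ᵥ c) ⬝ᵥ (F *ᵥ (B *ᵥ d)) := rfl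
    _ = (B *ᵥ c) ⬝ᵥ ((F * B) *ᵥ d) := by rw [Matrix.mulVec_mulVec]
    _ = (Bᵀᵀ *ᵥ c) ⬝ᵥ ((F * B) *ᵥ d) := by rw [Matrix.transpose_transpose]
    _ = c ⬝ᵥ (Bᵀ *ᵥ ((F * B) *ᵥ d)) := (haux Bᵀ c _).symm
    _ = c ⬝ᵥ ((Bᵀ * (F * B)) *ᵥ d) := by rw [Matrix.mulVec_mulVec]
    _ = c ⬝ᵥ (GQ *ᵥ d) := by rw [hGQdef, Matrix.mul_assoc]
  have hGQ : ∀ l k, GQ l k = bform F (w l) (w k) := by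
    intro l k
    rw [← hBw l, ← hBw k, hbf]
    simp [Matrix.mulVec_single, dotProduct, Pi.single_apply]
  -- the integer Gram matrix
  have hint : ∀ l k, isIntQ (GQ l k) := fun l k =>
    hGQ l k ▸ hL.integral (w l) (hw l) (w k) (hw k)
  let g : Matrix ι ι ℤ := Matrix.of fun l k => (hint l k).choose
  have hg : ∀ l k, (g l k : ℚ) = GQ l k := fun l k => ((hint l k).choose_spec).symm
  have hgmap : g.map ((↑) : ℤ → ℚ) = GQ := by
    ext l k; exact hg l k
  have hGQsymm : GQᵀ = GQ := by
    ext l k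
    rw [Matrix.transpose_apply, hGQ, hGQ, bform_comm hL.symm]
  have hgsymm : g.IsSymm := by
    ext l k
    have : ((g k l : ℤ) : ℚ) = ((g l k : ℤ) : ℚ) := by
      rw [hg, hg, hGQ, hGQ, bform_comm hL.symm]
    exact_mod_cast this
  have hgdiag : ∀ l, 2 ∣ g l l := by
    intro l
    obtain ⟨m, hm⟩ := hL.even (w l) (hw l)
    refine ⟨m, ?_⟩
    have : ((g l l : ℤ) : ℚ) = ((2 * m : ℤ) : ℚ) := by
      rw [hg, hGQ, hm]; push_cast; ring
    exact_mod_cast this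
  -- determinant facts
  have hgdetQ : (g.det : ℚ) = F.det * B.det ^ 2 := by
    have h1 : (g.map ((↑) : ℤ → ℚ)).det = (g.det : ℚ) := by
      have := RingHom.map_det (Int.castRingHom ℚ) g
      simpa [RingHom.mapMatrix_apply] using this.symm
    rw [← h1, hgmap, hGQdef, Matrix.det_mul, Matrix.det_mul, Matrix.det_transpose]
    ring
  have hgdetpos : 0 < g.det := by
    have : (0:ℚ) < (g.det : ℚ) := by
      rw [hgdetQ]
      have : B.det ^ 2 > 0 := by positivity
      exact mul_pos hFpos this
    exact_mod_cast this
  have hGQunit : IsUnit GQ.det := by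
    rw [← hgmap]
    have h1 : (g.map ((↑) : ℤ → ℚ)).det = (g.det : ℚ) := by
      have := RingHom.map_det (Int.castRingHom ℚ) g
      simpa [RingHom.mapMatrix_apply] using this.symm
    rw [h1]
    exact isUnit_iff_ne_zero.mpr (by exact_mod_cast hgdetpos.ne')
  -- ## Step 3: membership in L gives integer coordinates
  have hrep : ∀ y ∈ L, ∃ d : ι → ℤ, y = B *ᵥ (fun l => (d l : ℚ)) := by
    intro y hy
    refine ⟨fun l => b.repr ⟨y, hy⟩ (e.symm l), ?_⟩
    have h1 := b.sum_repr ⟨y, hy⟩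
    have h2 : ((∑ k, b.repr ⟨y, hy⟩ k • b k : L) : ι → ℚ) = y := by rw [h1]
    have h3 : ∑ k, b.repr ⟨y, hy⟩ k • v k = y := by
      conv_rhs => rw [← h2]
      simp only [AddSubmonoidClass.coe_finset_sum]
      rfl
    have h4 : ∑ l, (((b.repr ⟨y, hy⟩ (e.symm l) : ℤ) : ℚ)) • w l = y := by
      calc ∑ l, (((b.repr ⟨y, hy⟩ (e.symm l) : ℤ) : ℚ)) • w l
          = ∑ l, b.repr ⟨y, hy⟩ (e.symm l) • v (e.symm l) :=
        Finset.sum_congr rfl (fun l _ => Int.cast_smul_eq_zsmul ℚ _ _)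
      _ = ∑ k, b.repr ⟨y, hy⟩ k • v k :=
        Equiv.sum_comp e.symm (fun k => b.repr ⟨y, hy⟩ k • v k)
      _ = y := h3
    have hBsum : ∀ c : ι → ℚ, B *ᵥ c = ∑ l, c l • w l := by
      intro c
      ext t
      rw [Matrix.mulVec, dotProduct, Finset.sum_apply]
      apply Finset.sum_congr rfl
      intro l _
      simp [B, mul_comm]
    rw [hBsum]
    exact h4.symm
  -- ## Step 4: dual vectors and integrality of N • GQ⁻¹
  set x : ι → (ι → ℚ) := fun l => B *ᵥ (GQ⁻¹ *ᵥ Pi.single l 1) with hxdef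
  have hGQmul : ∀ z : ι → ℚ, GQ *ᵥ (GQ⁻¹ *ᵥ z) = z := by
    intro z
    rw [Matrix.mulVec_mulVec, Matrix.mul_nonsing_inv _ hGQunit, Matrix.one_mulVec]
  have hxdual : ∀ l, x l ∈ dual F L := by
    intro l
    rw [dual_mem]
    intro y hy
    obtain ⟨d, hd⟩ := hrep y hy
    rw [hd, hxdef, hbf]
    have : (GQ⁻¹ *ᵥ Pi.single l 1) ⬝ᵥ (GQ *ᵥ fun l => ((d l : ℤ) : ℚ)) =
        (GQᵀ *ᵥ (GQ⁻¹ *ᵥ Pi.single l 1)) ⬝ᵥ (fun l => ((d l : ℤ) : ℚ)) := by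
      rw [Matrix.dotProduct_mulVec, ← Matrix.mulVec_transpose]
    rw [this, hGQsymm, hGQmul]
    refine ⟨d l, ?_⟩
    simp [dotProduct, Pi.single_apply]
  have hxx : ∀ l k, bform F (x l) (x k) = GQ⁻¹ k l := by
    intro l k
    rw [hxdef, hbf, hGQmul]
    simp [dotProduct, Matrix.mulVec_single, Pi.single_apply]
  -- polarization
  have hNint : ∀ xx ∈ dual F L, ∀ yy ∈ dual F L, isIntQ ((N : ℚ) * bform F xx yy) := by
    intro xx hxx' yy hyy
    obtain ⟨m1, hm1⟩ := hN xx hxx'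
    obtain ⟨m2, hm2⟩ := hN yy hyy
    obtain ⟨m3, hm3⟩ := hN (xx + yy) (Submodule.add_mem _ hxx' hyy)
    refine ⟨m3 - m1 - m2, ?_⟩
    have hexp : bform F (xx + yy) (xx + yy) =
        bform F xx xx + 2 * bform F xx yy + bform F yy yy := by
      rw [bform_add_right]
      unfold bform
      rw [add_dotProduct, add_dotProduct]
      have hc : (yy ⬝ᵥ F *ᵥ xx) = (xx ⬝ᵥ F *ᵥ yy) := bform_comm hL.symm yy xx
      rw [hc]
      ring
    have h2 : (2:ℚ) * ((N:ℚ) * bform F xx yy) = 2 * ((m3 - m1 - m2 : ℤ) : ℚ) := by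
      have := hm3
      rw [hexp] at this
      push_cast
      linarith
    have := mul_left_cancel₀ (two_ne_zero (α := ℚ)) h2
    exact this
  -- ## Step 5: the integer matrix N • GQ⁻¹ and the determinant divisibility
  have hintInv : ∀ l k, isIntQ ((N : ℚ) * GQ⁻¹ l k) := by
    intro l k
    have := hNint (x k) (hxdual k) (x l) (hxdual l)
    rwa [hxx k l] at this
  let h : Matrix ι ι ℤ := Matrix.of fun l k => (hintInv l k).choose
  have hh : ∀ l k, (h l k : ℚ) = (N : ℚ) * GQ⁻¹ l k := fun l k => ((hintInv l k).choose_spec).symm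
  have hhmap : h.map ((↑) : ℤ → ℚ) = (N : ℚ) • GQ⁻¹ := by
    ext l k
    rw [Matrix.map_apply, Matrix.smul_apply, hh, smul_eq_mul]
  have hdetmul : (h.det : ℚ) * (g.det : ℚ) = (N : ℚ) ^ (Fintype.card ι) := by
    have h1 : (h.map ((↑) : ℤ → ℚ)).det = (h.det : ℚ) := by
      have := RingHom.map_det (Int.castRingHom ℚ) h
      simpa [RingHom.mapMatrix_apply] using this.symm
    have h2 : (g.map ((↑) : ℤ → ℚ)).det = (g.det : ℚ) := by
      have := RingHom.map_det (Int.castRingHom ℚ) g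
      simpa [RingHom.mapMatrix_apply] using this.symm
    rw [← h1, ← h2, hhmap, hgmap, Matrix.det_smul]
    have := Matrix.det_nonsing_inv_mul_det GQ hGQunit
    calc (N:ℚ) ^ (Fintype.card ι) * GQ⁻¹.det * GQ.det
        = (N:ℚ) ^ (Fintype.card ι) * (GQ⁻¹.det * GQ.det) := by ring
    _ = (N:ℚ) ^ (Fintype.card ι) := by rw [this, mul_one]
  have hdvd : g.det ∣ (N : ℤ) ^ (Fintype.card ι) := by
    refine ⟨h.det, ?_⟩
    have : ((g.det * h.det : ℤ) : ℚ) = (((N:ℤ) ^ (Fintype.card ι) : ℤ) : ℚ) := by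
      push_cast
      rw [mul_comm]
      exact_mod_cast hdetmul
    exact_mod_cast this.symm
  exact ⟨g, hgsymm, hgdiag, hgdetpos, hdvd⟩

end LatQ

namespace LatQ

/-- Let `p ≡ 1 (mod 4)` be a prime and `M` an even lattice of signature
`(n,2)` of level exactly `p`.  Then `n ≡ 2 (mod 4)`. -/
theorem statement3 {ι : Type*} [Fintype ι] [DecidableEq ι] (p : ℕ) (hp : p.Prime)
    (hp1 : p % 4 = 1) (n : ℕ)
    (F : Matrix ι ι ℚ) (L : Submodule ℤ (ι → ℚ))
    (hL : IsEvenLattice F L) (hsig : HasSignature F n 2) (hlev : HasLevel F L p) :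
    n % 4 = 2 := by
  classical
  obtain ⟨hcard, hFpos⟩ := sig_facts hL.nondeg hsig
  obtain ⟨g, hgs, hgd, hgpos, hgdvd⟩ := gram_det_dvd hL hFpos p hlev.2.1
  have hpz : Prime ((p:ℕ) : ℤ) := Nat.prime_iff_prime_int.mp hp
  obtain ⟨a, _, hassoc⟩ := (dvd_prime_pow hpz _).mp hgdvd
  have hppos : (0:ℤ) < (p:ℤ) ^ a := pow_pos (by exact_mod_cast hp.pos) a
  have hdetg : g.det = (p:ℤ) ^ a := by
    rcases Int.associated_iff.mp hassoc with h | h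
    · exact h
    · exfalso
      have : (0:ℤ) < (p:ℤ) ^ a := hppos
      omega
  have hodd : ¬ (2:ℤ) ∣ g.det := by
    rw [hdetg]
    intro h2
    have h3 : (2:ℤ) ∣ (p:ℤ) := Int.prime_two.dvd_of_dvd_pow h2
    have h4 : (2:ℕ) ∣ p := by exact_mod_cast h3
    omega
  obtain ⟨s, hms, hmod⟩ := LatQ2Aux.even_symm_det_mod_four' g hgs hgd hodd
  -- p^a ≡ 1 (mod 4)
  have hp4 : ((p:ℤ)) ≡ 1 [ZMOD 4] := by
    show (p:ℤ) % 4 = 1 % 4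
    omega
  have hpa : g.det ≡ 1 [ZMOD 4] := by
    rw [hdetg]
    calc ((p:ℤ)) ^ a ≡ 1 ^ a [ZMOD 4] := hp4.pow a
    _ = 1 := one_pow a
  -- hence s is even
  have hseven : Even s := by
    by_contra hno
    have hsodd : Odd s := Nat.odd_iff.mpr (Nat.not_even_iff.mp hno)
    rw [hsodd.neg_one_pow] at hmod
    have h1 : g.det % 4 = (-1 : ℤ) % 4 := hmod
    have h2 : g.det % 4 = (1 : ℤ) % 4 := hpa
    omega
  obtain ⟨t, ht⟩ := hseven
  omega

end LatQ
end

section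
/- Let L be a positive definite even lattice of rank 4 such that the set {v ∈ L : (v,v) = 2} spans L⊗ℚ. Then every prime divisor of det L is at most 5. -/
open Matrix

namespace LatQ

theorem my_det_fin_four (A : Matrix (Fin 4) (Fin 4) ℤ) :
    A.det =
      A 0 0*A 1 1*A 2 2*A 3 3 - A 0 0*A 1 1*A 2 3*A 3 2 - A 0 0*A 1 2*A 2 1*A 3 3
      + A 0 0*A 1 2*A 2 3*A 3 1 + A 0 0*A 1 3*A 2 1*A 3 2 - A 0 0*A 1 3*A 2 2*A 3 1
      - A 0 1*A 1 0*A 2 2*A 3 3 + A 0 1*A 1 0*A 2 3*A 3 2 + A 0 1*A 1 2*A 2 0*A 3 3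
      - A 0 1*A 1 2*A 2 3*A 3 0 - A 0 1*A 1 3*A 2 0*A 3 2 + A 0 1*A 1 3*A 2 2*A 3 0
      + A 0 2*A 1 0*A 2 1*A 3 3 - A 0 2*A 1 0*A 2 3*A 3 1 - A 0 2*A 1 1*A 2 0*A 3 3
      + A 0 2*A 1 1*A 2 3*A 3 0 + A 0 2*A 1 3*A 2 0*A 3 1 - A 0 2*A 1 3*A 2 1*A 3 0
      - A 0 3*A 1 0*A 2 1*A 3 2 + A 0 3*A 1 0*A 2 2*A 3 1 + A 0 3*A 1 1*A 2 0*A 3 2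
      - A 0 3*A 1 1*A 2 2*A 3 0 - A 0 3*A 1 2*A 2 0*A 3 1 + A 0 3*A 1 2*A 2 1*A 3 0 := by
  rw [Matrix.det_succ_row_zero]
  simp [Fin.sum_univ_succ, Matrix.det_fin_three, Matrix.submatrix_apply, Fin.succAbove]
  ring


/-- Value of the quadratic form of a "root Gram matrix" with off-diagonal
entries `a b c d e f` on the vector `(t0, t1, t2, t3)`. -/
def qf (a b c d e f t0 t1 t2 t3 : ℤ) : ℤ :=
  2*(t0*t0+t1*t1+t2*t2+t3*t3) + 2*(a*t0*t1+b*t0*t2+c*t0*t3+d*t1*t2+e*t1*t3+f*t2*t3)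

/-- Determinant of the symmetric matrix with diagonal `2` and off-diagonal
entries `a b c d e f`. -/
def dd (a b c d e f : ℤ) : ℤ :=
  16 - 4*(a*a+b*b+c*c+d*d+e*e+f*f) + a*a*f*f + b*b*e*e + c*c*d*d
    + 4*(d*e*f + b*c*f + a*c*e + a*b*d) - 2*(b*c*d*e + a*c*d*f + a*b*e*f)

/-- Test vectors certifying positive definiteness strongly enough. -/
def tests : List (ℤ × ℤ × ℤ × ℤ) :=
  [(1,-1,-1,-1),(1,-1,-1,1),(1,-1,1,-1),(1,-1,1,1),(1,1,-1,-1),(1,1,-1,1),(1,1,1,-1),(1,1,1,1),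
   (0,1,-1,-1),(0,1,-1,1),(0,1,1,-1),(0,1,1,1),(1,-1,-1,0),(1,-1,0,-1),(1,-1,0,1),(1,-1,1,0),
   (1,0,-1,-1),(1,0,-1,1),(1,0,1,-1),(1,0,1,1),(1,1,-1,0),(1,1,0,-1),(1,1,0,1),(1,1,1,0)]

def ok (a b c d e f : ℤ) : Bool :=
  decide (dd a b c d e f ∣ 720) ||
    !(tests.all (fun t => 0 < qf a b c d e f t.1 t.2.1 t.2.2.1 t.2.2.2))

def vals : List ℤ := [-1, 0, 1]

theorem check_all : (vals.all fun a => vals.all fun b => vals.all fun c => vals.all fun d =>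
    vals.all fun e => vals.all fun f => ok a b c d e f) = true := by decide

theorem finite_check {a b c d e f : ℤ}
    (ha : a = -1 ∨ a = 0 ∨ a = 1) (hb : b = -1 ∨ b = 0 ∨ b = 1) (hc : c = -1 ∨ c = 0 ∨ c = 1)
    (hd : d = -1 ∨ d = 0 ∨ d = 1) (he : e = -1 ∨ e = 0 ∨ e = 1) (hf : f = -1 ∨ f = 0 ∨ f = 1)
    (hpos : ∀ t ∈ tests, 0 < qf a b c d e f t.1 t.2.1 t.2.2.1 t.2.2.2) :
    dd a b c d e f ∣ 720 := by
  have hmem : ∀ {x : ℤ}, (x = -1 ∨ x = 0 ∨ x = 1) → x ∈ vals := by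
    rintro x (rfl|rfl|rfl) <;> simp [vals]
  have h := check_all
  rw [List.all_eq_true] at h
  have h := h a (hmem ha); rw [List.all_eq_true] at h
  have h := h b (hmem hb); rw [List.all_eq_true] at h
  have h := h c (hmem hc); rw [List.all_eq_true] at h
  have h := h d (hmem hd); rw [List.all_eq_true] at h
  have h := h e (hmem he); rw [List.all_eq_true] at h
  have h := h f (hmem hf)
  unfold ok at h
  rw [Bool.or_eq_true, decide_eq_true_iff, Bool.not_eq_true', ← Bool.not_eq_true,
    List.all_eq_true] at h
  rcases h with h | h
  · exact h
  · exact absurd (fun t ht => decide_eq_true (hpos t ht)) h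

/-- Let `L` be a positive definite even lattice of rank `4` whose
vectors of norm `2` span `L ⊗ ℚ`.  Then every prime divisor of `det L` is at most `5`. -/
theorem statement7 (G : Matrix (Fin 4) (Fin 4) ℤ) (hsymm : G.IsSymm)
    (heven : ∀ v : Fin 4 → ℤ, ∃ m : ℤ, v ⬝ᵥ G *ᵥ v = 2 * m)
    (hpos : ∀ v : Fin 4 → ℤ, v ≠ 0 → 0 < v ⬝ᵥ G *ᵥ v)
    (hspan : Submodule.span ℚ
        ((fun v : Fin 4 → ℤ => (fun i => (v i : ℚ))) '' {v | v ⬝ᵥ G *ᵥ v = 2}) = ⊤) :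
    ∀ q : ℕ, q.Prime → (q : ℤ) ∣ G.det → q ≤ 5 := by
  intro q hq hqdet
  -- Step 1: extract four linearly independent root vectors
  obtain ⟨bset, hbs, hbspan, hbli⟩ := exists_linearIndependent ℚ
    ((fun v : Fin 4 → ℤ => (fun i => (v i : ℚ))) '' {v | v ⬝ᵥ G *ᵥ v = 2})
  have hbspan' : ⊤ ≤ Submodule.span ℚ (Set.range ((↑) : bset → (Fin 4 → ℚ))) := by
    rw [Subtype.range_coe, hbspan, hspan]
  let bas := Module.Basis.mk hbli hbspan'
  haveI : Fintype bset := FiniteDimensional.fintypeBasisIndex bas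
  have hcard : Fintype.card bset = 4 := by
    have := Module.finrank_eq_card_basis bas
    simpa using this.symm
  let eqv := (Fintype.equivFinOfCardEq hcard).symm
  set w : Fin 4 → (Fin 4 → ℚ) := fun i => ((eqv i : bset) : Fin 4 → ℚ) with hw
  have hw_li : LinearIndependent ℚ w := hbli.comp eqv eqv.injective
  have hw_mem : ∀ i, w i ∈ (fun v : Fin 4 → ℤ => (fun i => (v i : ℚ))) ''
      {v | v ⬝ᵥ G *ᵥ v = 2} := fun i => hbs (eqv i).2
  choose r hr2 hrw using fun i => (Set.mem_image _ _ _).mp (hw_mem i)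
  -- Step 2: independence over ℤ
  have hzero : ∀ t : Fin 4 → ℤ, (∑ i, t i • r i) = 0 → t = 0 := by
    intro t ht
    have hcast : ∑ i, (t i : ℚ) • w i = 0 := by
      funext j
      have := congrFun ht j
      simp only [Finset.sum_apply, Pi.smul_apply, Pi.zero_apply, smul_eq_mul] at this ⊢
      have : ((∑ i, t i * r i j : ℤ) : ℚ) = 0 := by rw [this]; simp [Finset.sum_apply]
      push_cast at this
      calc ∑ i, (t i : ℚ) * w i j = ∑ i, (t i : ℚ) * (r i j : ℚ) := by
            refine Finset.sum_congr rfl fun i _ => ?_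
            rw [← hrw i]
        _ = 0 := this
    have := Fintype.linearIndependent_iff.mp hw_li _ hcast
    funext i
    exact_mod_cast this i
  -- Step 3: the Gram matrix A of the roots
  set B : Matrix (Fin 4) (Fin 4) ℤ := Matrix.of fun j i => r i j with hB
  set A : Matrix (Fin 4) (Fin 4) ℤ := Bᵀ * G * B with hA
  have hBv : ∀ t : Fin 4 → ℤ, B *ᵥ t = ∑ i, t i • r i := by
    intro t; funext j
    simp [hB, Matrix.mulVec, dotProduct, Finset.sum_apply, mul_comm]
  have hAq : ∀ t u : Fin 4 → ℤ, t ⬝ᵥ A *ᵥ u = (B *ᵥ t) ⬝ᵥ G *ᵥ (B *ᵥ u) := by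
    intro t u
    rw [hA, ← Matrix.mulVec_mulVec, ← Matrix.mulVec_mulVec, Matrix.dotProduct_mulVec,
      Matrix.vecMul_transpose]
  have hAe : ∀ i j, A i j = r i ⬝ᵥ G *ᵥ r j := by
    intro i j
    simp only [hA, hB, Matrix.mul_apply, dotProduct, Matrix.mulVec,
      Matrix.transpose_apply, Matrix.of_apply, Finset.sum_mul, Finset.mul_sum]
    rw [Finset.sum_comm]
    exact Finset.sum_congr rfl fun k _ => Finset.sum_congr rfl fun l _ => by ring
  -- symmetry of the bilinear form
  have hGsymm : ∀ x y : Fin 4 → ℤ, x ⬝ᵥ G *ᵥ y = y ⬝ᵥ G *ᵥ x := by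
    intro x y
    rw [Matrix.dotProduct_mulVec, ← Matrix.mulVec_transpose, hsymm.eq, dotProduct_comm]
  have hAsymm : ∀ i j, A j i = A i j := by
    intro i j; rw [hAe, hAe, hGsymm]
  have hAdiag : ∀ i, A i i = 2 := by intro i; rw [hAe]; exact hr2 i
  -- positivity of A
  have hQpos : ∀ t : Fin 4 → ℤ, t ≠ 0 → 0 < t ⬝ᵥ A *ᵥ t := by
    intro t ht
    rw [hAq]
    refine hpos _ fun h0 => ht (hzero t ?_)
    rw [← hBv]; exact h0
  -- off-diagonal entries are in {-1, 0, 1}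
  have hoff : ∀ i j, i ≠ j → (A i j = -1 ∨ A i j = 0 ∨ A i j = 1) := by
    intro i j hij
    set a : ℤ := A i j with ha
    have hune : (fun k => if k = i then a else if k = j then -2 else 0 : Fin 4 → ℤ) ≠ 0 := by
      intro h0
      have := congrFun h0 j
      simp [if_neg (Ne.symm hij)] at this
    have hsum : (∑ k, (fun k => if k = i then a else if k = j then -2 else 0 : Fin 4 → ℤ) k • r k)
        = a • r i - 2 • r j := by
      rw [Finset.sum_eq_add_of_mem i j (Finset.mem_univ _) (Finset.mem_univ _) hij ?_]
      · simp [if_neg (Ne.symm hij), sub_eq_add_neg]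
      · intro k _ hk
        simp [if_neg hk.1, if_neg hk.2]
    have hq2 : 0 < (a • r i - 2 • r j) ⬝ᵥ G *ᵥ (a • r i - 2 • r j) := by
      refine hpos _ fun h0 => hune (hzero _ ?_)
      rw [hsum]; exact h0
    have hexp : (a • r i - 2 • r j) ⬝ᵥ G *ᵥ (a • r i - 2 • r j)
        = a*a*(r i ⬝ᵥ G *ᵥ r i) - 2*a*(r i ⬝ᵥ G *ᵥ r j) - 2*a*(r j ⬝ᵥ G *ᵥ r i)
          + 4*(r j ⬝ᵥ G *ᵥ r j) := by
      simp only [sub_dotProduct, smul_dotProduct, Matrix.mulVec_sub,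
        Matrix.mulVec_smul, dotProduct_sub, dotProduct_smul,
        smul_eq_mul]
      ring
    rw [hexp, hr2 i, hr2 j, ← hAe, ← hAe, hAsymm i j, ← ha] at hq2
    have h1 : a * a ≤ 3 := by nlinarith
    have h2 : -1 ≤ a := by nlinarith
    have h3 : a ≤ 1 := by nlinarith
    omega
  -- Step 4: express the quadratic form and determinant of A in the entries
  have hQF : ∀ t : Fin 4 → ℤ, t ⬝ᵥ A *ᵥ t
      = qf (A 0 1) (A 0 2) (A 0 3) (A 1 2) (A 1 3) (A 2 3) (t 0) (t 1) (t 2) (t 3) := by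
    intro t
    simp only [dotProduct, Matrix.mulVec, Fin.sum_univ_four]
    rw [hAdiag 0, hAdiag 1, hAdiag 2, hAdiag 3, hAsymm 0 1, hAsymm 0 2, hAsymm 0 3,
      hAsymm 1 2, hAsymm 1 3, hAsymm 2 3]
    unfold qf; ring
  have key : ∀ t0 t1 t2 t3 : ℤ, (t0 ≠ 0 ∨ t1 ≠ 0 ∨ t2 ≠ 0 ∨ t3 ≠ 0) →
      0 < qf (A 0 1) (A 0 2) (A 0 3) (A 1 2) (A 1 3) (A 2 3) t0 t1 t2 t3 := by
    intro t0 t1 t2 t3 hne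
    have hv : (![t0, t1, t2, t3] : Fin 4 → ℤ) ≠ 0 := by
      intro h0
      rcases hne with h | h | h | h
      · exact h (by simpa using congrFun h0 0)
      · exact h (by simpa using congrFun h0 1)
      · exact h (by simpa using congrFun h0 2)
      · exact h (by simpa using congrFun h0 3)
    have hp := hQpos _ hv
    rw [hQF] at hp
    simpa using hp
  have hdvd720 : dd (A 0 1) (A 0 2) (A 0 3) (A 1 2) (A 1 3) (A 2 3) ∣ 720 := by
    refine finite_check (hoff 0 1 (by decide)) (hoff 0 2 (by decide)) (hoff 0 3 (by decide))
      (hoff 1 2 (by decide)) (hoff 1 3 (by decide)) (hoff 2 3 (by decide)) ?_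
    intro t ht
    fin_cases ht <;> exact key _ _ _ _ (by norm_num)
  have hdet : A.det = dd (A 0 1) (A 0 2) (A 0 3) (A 1 2) (A 1 3) (A 2 3) := by
    rw [my_det_fin_four, hAdiag 0, hAdiag 1, hAdiag 2, hAdiag 3, hAsymm 0 1, hAsymm 0 2,
      hAsymm 0 3, hAsymm 1 2, hAsymm 1 3, hAsymm 2 3]
    unfold dd; ring
  have hqA : (q : ℤ) ∣ A.det := by
    rw [hA, Matrix.det_mul, Matrix.det_mul, Matrix.det_transpose]
    exact (hqdet.mul_left _).mul_right _
  have h720 : (q : ℤ) ∣ 720 := (hdet ▸ hqA).trans hdvd720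
  have h720n : q ∣ 720 := by exact_mod_cast h720
  rw [show (720 : ℕ) = 2 ^ 4 * (3 ^ 2 * 5) by norm_num] at h720n
  rcases (Nat.Prime.dvd_mul hq).mp h720n with h | h
  · have := Nat.le_of_dvd (by norm_num) (hq.dvd_of_dvd_pow h); omega
  · rcases (Nat.Prime.dvd_mul hq).mp h with h | h
    · have := Nat.le_of_dvd (by norm_num) (hq.dvd_of_dvd_pow h); omega
    · exact Nat.le_of_dvd (by norm_num) h

end LatQ
end

section
/- The even lattice U ⊕ U(3) ⊕ A₂ ⊕ A₂ ⊕ A₂ of signature (8,2) is isometric to the even lattice U ⊕ U ⊕ E₆^∨(3). -/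
open Matrix

namespace LatQ

/-- The rational Gram matrix of the hyperbolic plane `U`. -/
def UQ : Matrix (Fin 2) (Fin 2) ℚ := !![0, 1; 1, 0]

/-- The rational Gram matrix of `U(3)`. -/
def U3Q : Matrix (Fin 2) (Fin 2) ℚ := !![0, 3; 3, 0]

/-- The rational Gram matrix of the root lattice `A₂`. -/
def A2Q : Matrix (Fin 2) (Fin 2) ℚ := !![2, -1; -1, 2]

/-- The rational Gram matrix of the root lattice `E₆`
(chain of 5 nodes, an extra node attached to the middle one). -/
def E6Q : Matrix (Fin 6) (Fin 6) ℚ :=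
  !![2, -1, 0, 0, 0, 0;
     -1, 2, -1, 0, 0, 0;
     0, -1, 2, -1, 0, -1;
     0, 0, -1, 2, -1, 0;
     0, 0, 0, -1, 2, 0;
     0, 0, -1, 0, 0, 2]

/-! ### Auxiliary material for statement10 -/

section Aux

abbrev It : Type := Fin 2 ⊕ (Fin 2 ⊕ (Fin 2 ⊕ (Fin 2 ⊕ Fin 2)))
abbrev Kt : Type := Fin 2 ⊕ (Fin 2 ⊕ Fin 6)

def ixF : It → Fin 10
  | .inl i => ⟨i.1, by have := i.2; omega⟩
  | .inr (.inl i) => ⟨2 + i.1, by have := i.2; omega⟩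
  | .inr (.inr (.inl i)) => ⟨4 + i.1, by have := i.2; omega⟩
  | .inr (.inr (.inr (.inl i))) => ⟨6 + i.1, by have := i.2; omega⟩
  | .inr (.inr (.inr (.inr i))) => ⟨8 + i.1, by have := i.2; omega⟩

def kxF : Kt → Fin 10
  | .inl i => ⟨i.1, by have := i.2; omega⟩
  | .inr (.inl i) => ⟨2 + i.1, by have := i.2; omega⟩
  | .inr (.inr i) => ⟨4 + i.1, by have := i.2; omega⟩

def Mz310 : Matrix (Fin 10) (Fin 10) ℤ :=
 !![3, 0, 0, 0, 0, 0, 0, 0, 0, 0;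
   0, 3, 0, 0, 0, 0, 0, 0, 0, 0;
   0, 0, 9, (-9), (-3), (-3), (-6), 3, (-6), 3;
   0, 0, (-9), 9, 6, (-3), 6, (-3), 6, (-3);
   0, 0, 0, 0, 0, 0, 1, (-2), (-1), (-1);
   0, 0, (-6), 6, 3, 0, 5, (-4), 4, (-5);
   0, 0, (-6), 9, 3, 0, 6, (-6), 6, (-6);
   0, 0, (-6), 6, 3, 0, 4, (-5), 5, (-4);
   0, 0, 0, 0, 0, 0, (-1), (-1), 1, (-2);
   0, 0, (-3), 6, 3, 0, 3, (-3), 3, (-3)]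

def Mzi10 : Matrix (Fin 10) (Fin 10) ℤ :=
 !![1, 0, 0, 0, 0, 0, 0, 0, 0, 0;
   0, 1, 0, 0, 0, 0, 0, 0, 0, 0;
   0, 0, 1, (-1), (-2), 1, 0, 1, (-2), 1;
   0, 0, (-1), 1, 2, (-2), 1, (-2), 2, 0;
   0, 0, 1, (-1), (-2), 2, (-2), 2, (-2), 2;
   0, 0, 0, (-1), (-1), 1, (-1), 1, (-1), 1;
   0, 0, 1, (-1), (-2), 2, 0, 1, (-3), 0;
   0, 0, 0, 0, (-1), 1, 0, (-1), 0, 0;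
   0, 0, 1, (-1), (-3), 1, 0, 2, (-2), 0;
   0, 0, 0, 0, 0, (-1), 0, 1, (-1), 0]

def Sz10 : Matrix (Fin 10) (Fin 10) ℤ :=
 !![1, 0, 0, 0, 0, 0, 0, 0, 0, 0;
   0, 1, 0, 0, 0, 0, 0, 0, 0, 0;
   0, 0, 1, (-1), 0, 2, 3, 2, 0, 2;
   0, 0, (-1), 1, 0, (-2), (-2), (-2), 0, (-1);
   0, 0, 1, (-1), 0, 2, 2, 2, 0, 2;
   0, 0, 0, (-1), 0, 1, 1, 1, 0, 1;
   0, 0, 1, (-1), 0, 2, 2, 1, (-1), 1;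
   0, 0, 0, 0, (-1), (-1), (-2), (-2), (-1), (-1);
   0, 0, 1, (-1), (-1), 1, 2, 2, 0, 1;
   0, 0, 0, 0, (-1), (-2), (-2), (-1), (-1), (-1)]

def Mz3 : Matrix Kt It ℤ := Matrix.of fun a b => Mz310 (kxF a) (ixF b)
def Mzi : Matrix It Kt ℤ := Matrix.of fun a b => Mzi10 (ixF a) (kxF b)
def Sz : Matrix It Kt ℤ := Matrix.of fun a b => Sz10 (ixF a) (kxF b)

def UZ : Matrix (Fin 2) (Fin 2) ℤ := !![0, 1; 1, 0]
def U3Z : Matrix (Fin 2) (Fin 2) ℤ := !![0, 3; 3, 0]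
def A2Z : Matrix (Fin 2) (Fin 2) ℤ := !![2, -1; -1, 2]
def E6Z : Matrix (Fin 6) (Fin 6) ℤ :=
  !![2, -1, 0, 0, 0, 0;
     -1, 2, -1, 0, 0, 0;
     0, -1, 2, -1, 0, -1;
     0, 0, -1, 2, -1, 0;
     0, 0, 0, -1, 2, 0;
     0, 0, -1, 0, 0, 2]

def G1z : Matrix It It ℤ :=
  Matrix.fromBlocks UZ 0 0 (Matrix.fromBlocks U3Z 0 0
    (Matrix.fromBlocks A2Z 0 0 (Matrix.fromBlocks A2Z 0 0 A2Z)))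
def G2z : Matrix Kt Kt ℤ :=
  Matrix.fromBlocks UZ 0 0 (Matrix.fromBlocks UZ 0 0 ((3 : ℤ) • E6Z))
def E6bigz : Matrix Kt Kt ℤ :=
  Matrix.fromBlocks 1 0 0 (Matrix.fromBlocks 1 0 0 E6Z)

set_option maxRecDepth 100000 in
lemma dz1 : ∀ i j, (Mzi * Mz3) i j = ((3 : ℤ) • (1 : Matrix It It ℤ)) i j := by decide

set_option maxRecDepth 100000 in
lemma dz2 : ∀ i j, (Mz3 * Mzi) i j = ((3 : ℤ) • (1 : Matrix Kt Kt ℤ)) i j := by decide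

set_option maxRecDepth 100000 in
lemma dz3 : ∀ i j, (Mz3ᵀ * G2z * Mz3) i j = ((9 : ℤ) • G1z) i j := by decide

set_option maxRecDepth 100000 in
lemma dz4 : ∀ i j, (3 : ℤ) ∣ (E6bigz * Mz3) i j := by decide

set_option maxRecDepth 100000 in
lemma dz5 : ∀ i j, (Sz * E6bigz) i j = Mzi i j := by
  have h : ∀ (j : Kt) (i : It), (Sz * E6bigz) i j = Mzi i j := by decide
  exact fun i j => h j i


/-! #### Casting to `ℚ` -/

/-- Cast an integer matrix to a rational one. -/
def cq {a b : Type*} (A : Matrix a b ℤ) : Matrix a b ℚ := A.map (Int.castRingHom ℚ)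

lemma cq_mul {a b c : Type*} [Fintype b] (A : Matrix a b ℤ) (B : Matrix b c ℤ) :
    cq (A * B) = cq A * cq B := Matrix.map_mul

lemma cq_transpose {a b : Type*} (A : Matrix a b ℤ) : cq Aᵀ = (cq A)ᵀ := rfl

lemma cq_zsmul {a b : Type*} (n : ℤ) (A : Matrix a b ℤ) :
    cq (n • A) = (n : ℚ) • cq A := by
  ext i j
  simp [cq, Matrix.map_apply]

lemma cq_one {a : Type*} [Fintype a] [DecidableEq a] :
    cq (1 : Matrix a a ℤ) = (1 : Matrix a a ℚ) :=
  Matrix.map_one _ (by simp) (by simp)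

lemma cq_fromBlocks {a b : Type*} (A : Matrix a a ℤ) (B : Matrix a b ℤ)
    (C : Matrix b a ℤ) (D : Matrix b b ℤ) :
    cq (Matrix.fromBlocks A B C D) =
      Matrix.fromBlocks (cq A) (cq B) (cq C) (cq D) := by
  ext i j
  rcases i with i | i <;> rcases j with j | j <;> rfl

lemma cq_UZ : cq UZ = UQ := by
  ext i j; fin_cases i <;> fin_cases j <;> simp [cq, UZ, UQ]

lemma cq_U3Z : cq U3Z = U3Q := by
  ext i j; fin_cases i <;> fin_cases j <;> simp [cq, U3Z, U3Q]

lemma cq_A2Z : cq A2Z = A2Q := by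
  ext i j; fin_cases i <;> fin_cases j <;> simp [cq, A2Z, A2Q]

lemma cq_E6Z : cq E6Z = E6Q := by
  ext i j; fin_cases i <;> fin_cases j <;> rfl

lemma cq_zero {a b : Type*} : cq (0 : Matrix a b ℤ) = 0 := by
  ext i j; simp [cq]

/-- The rational ambient Gram matrix of the first lattice. -/
lemma cq_G1z : cq G1z = oplusF UQ (oplusF U3Q (oplusF A2Q (oplusF A2Q A2Q))) := by
  unfold G1z oplusF
  simp only [cq_fromBlocks, cq_zero, cq_UZ, cq_U3Z, cq_A2Z]

lemma cq_G2z : cq G2z = oplusF UQ (oplusF UQ ((3 : ℚ) • E6Q)) := by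
  unfold G2z oplusF
  simp only [cq_fromBlocks, cq_zero, cq_UZ, cq_zsmul, cq_E6Z]
  norm_num

/-- The block-diagonal matrix `diag(1, 1, E₆)` over `ℚ`. -/
def E6bigq : Matrix Kt Kt ℚ :=
  Matrix.fromBlocks 1 0 0 (Matrix.fromBlocks 1 0 0 E6Q)

lemma cq_E6bigz : cq E6bigz = E6bigq := by
  unfold E6bigz E6bigq
  simp only [cq_fromBlocks, cq_zero, cq_one, cq_E6Z]

/-- The rational matrix of the isometry. -/
def Mq : Matrix Kt It ℚ := (3 : ℚ)⁻¹ • cq Mz3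

/-- The rational matrix of the inverse isometry. -/
def Miq : Matrix It Kt ℚ := cq Mzi

lemma hq1 : Miq * Mq = 1 := by
  have h : Mzi * Mz3 = (3 : ℤ) • 1 := by ext i j; exact dz1 i j
  rw [Miq, Mq, Matrix.mul_smul, ← cq_mul, h, cq_zsmul, cq_one, smul_smul]
  norm_num

lemma hq2 : Mq * Miq = 1 := by
  have h : Mz3 * Mzi = (3 : ℤ) • 1 := by ext i j; exact dz2 i j
  rw [Miq, Mq, Matrix.smul_mul, ← cq_mul, h, cq_zsmul, cq_one, smul_smul]
  norm_num

lemma hq3 : Mqᵀ * cq G2z * Mq = cq G1z := by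
  have h : Mz3ᵀ * G2z * Mz3 = (9 : ℤ) • G1z := by ext i j; exact dz3 i j
  rw [Mq, Matrix.transpose_smul, Matrix.smul_mul, Matrix.smul_mul, Matrix.mul_smul,
    ← cq_transpose, ← cq_mul, ← cq_mul, h, cq_zsmul, smul_smul, smul_smul]
  norm_num

lemma hq5 : cq Sz * E6bigq = Miq := by
  have h : Sz * E6bigz = Mzi := by ext i j; exact dz5 i j
  rw [← cq_E6bigz, ← cq_mul, h, Miq]

/-! #### Integrality lemmas -/

lemma isIntQ_mul {a b : ℚ} (ha : isIntQ a) (hb : isIntQ b) : isIntQ (a * b) := by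
  obtain ⟨m, rfl⟩ := ha; obtain ⟨n, rfl⟩ := hb; exact ⟨m * n, by push_cast; ring⟩

lemma isIntQ_sum {α : Type*} {s : Finset α} {f : α → ℚ}
    (h : ∀ i ∈ s, isIntQ (f i)) : isIntQ (∑ i ∈ s, f i) :=
  Finset.sum_induction f isIntQ (fun _ _ => isIntQ_add) ⟨0, by norm_num⟩ h

lemma isIntQ_dot {α : Type*} [Fintype α] {x y : α → ℚ}
    (hx : ∀ i, isIntQ (x i)) (hy : ∀ i, isIntQ (y i)) : isIntQ (x ⬝ᵥ y) :=
  isIntQ_sum fun i _ => isIntQ_mul (hx i) (hy i)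

lemma isIntQ_mulVec {α β : Type*} [Fintype β] {A : Matrix α β ℚ}
    (hA : ∀ i j, isIntQ (A i j)) {x : β → ℚ} (hx : ∀ j, isIntQ (x j)) :
    ∀ i, isIntQ ((A *ᵥ x) i) :=
  fun i => isIntQ_dot (hA i) hx

lemma isIntQ_cq {a b : Type*} (A : Matrix a b ℤ) (i : a) (j : b) : isIntQ (cq A i j) :=
  ⟨A i j, rfl⟩

/-- The entries of `E6bigq * Mq` are integers. -/
lemma hPint : ∀ i j, isIntQ ((E6bigq * Mq) i j) := by
  intro i j
  obtain ⟨m, hm⟩ := dz4 i j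
  have : (E6bigq * Mq) i j = (3 : ℚ)⁻¹ * ((cq (E6bigz * Mz3)) i j) := by
    rw [Mq, Matrix.mul_smul, ← cq_E6bigz, ← cq_mul]
    simp [Matrix.smul_apply]
  rw [this, cq]
  refine ⟨m, ?_⟩
  simp only [Matrix.map_apply, hm, Int.coe_castRingHom]
  push_cast
  ring

/-! #### Block action of `E6bigq` -/

lemma E6bigq_mulVec (v : Kt → ℚ) :
    E6bigq *ᵥ v = Sum.elim (fun i => v (Sum.inl i))
      (Sum.elim (fun i => v (Sum.inr (Sum.inl i)))
        (E6Q *ᵥ fun t => v (Sum.inr (Sum.inr t)))) := by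
  have hv : v = Sum.elim (fun i => v (Sum.inl i))
      (Sum.elim (fun i => v (Sum.inr (Sum.inl i))) (fun t => v (Sum.inr (Sum.inr t)))) := by
    funext t
    rcases t with i | t
    · rfl
    · rcases t with i | i <;> rfl
  rw [E6bigq]
  conv_lhs => rw [hv]
  rw [Matrix.fromBlocks_mulVec, Matrix.fromBlocks_mulVec]
  simp [Matrix.one_mulVec, Matrix.zero_mulVec]

/-! #### bform lemmas -/

lemma dot_transpose {a b : Type*} [Fintype a] [Fintype b]
    (A : Matrix a b ℚ) (x : b → ℚ) (w : a → ℚ) :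
    x ⬝ᵥ (Aᵀ *ᵥ w) = (A *ᵥ x) ⬝ᵥ w := by
  rw [Matrix.dotProduct_mulVec, Matrix.vecMul_transpose]

lemma bform_matrix {a b : Type*} [Fintype a] [Fintype b]
    (F : Matrix a a ℚ) (A : Matrix a b ℚ) (x y : b → ℚ) :
    bform F (A *ᵥ x) (A *ᵥ y) = bform (Aᵀ * F * A) x y := by
  unfold bform
  rw [← Matrix.mulVec_mulVec, ← Matrix.mulVec_mulVec, dot_transpose, Matrix.mulVec_mulVec]

lemma E6Q_transpose : E6Qᵀ = E6Q := by
  ext i j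
  fin_cases i <;> fin_cases j <;> rfl

lemma bform_E6 (x z : Fin 6 → ℚ) : bform E6Q x z = (E6Q *ᵥ x) ⬝ᵥ z := by
  unfold bform
  rw [← E6Q_transpose, dot_transpose, E6Q_transpose]

lemma mem_stdLat {α : Type*} [Fintype α] {x : α → ℚ} :
    x ∈ stdLat α ↔ ∀ i, isIntQ (x i) := Iff.rfl

/-- The target lattice `U ⊕ U ⊕ E₆^∨(3)`. -/
abbrev L2' : Submodule ℤ (Kt → ℚ) :=
  oplusL (stdLat (Fin 2)) (oplusL (stdLat (Fin 2)) (dual E6Q (stdLat (Fin 6))))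

lemma mem_L2' {v : Kt → ℚ} :
    v ∈ L2' ↔ ((fun i => v (Sum.inl i)) ∈ stdLat (Fin 2) ∧
      ((fun i => v (Sum.inr (Sum.inl i))) ∈ stdLat (Fin 2) ∧
        (fun t => v (Sum.inr (Sum.inr t))) ∈ dual E6Q (stdLat (Fin 6)))) := Iff.rfl

lemma mem_dual_E6 {w : Fin 6 → ℚ} (h : ∀ j, isIntQ ((E6Q *ᵥ w) j)) :
    w ∈ dual E6Q (stdLat (Fin 6)) := by
  intro z hz
  rw [bform_E6]
  exact isIntQ_dot h (mem_stdLat.mp hz)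

lemma dual_E6_int {w : Fin 6 → ℚ} (hw : w ∈ dual E6Q (stdLat (Fin 6))) :
    ∀ j, isIntQ ((E6Q *ᵥ w) j) := by
  intro j
  have hz : (Pi.single j 1 : Fin 6 → ℚ) ∈ stdLat (Fin 6) := by
    rw [mem_stdLat]
    intro i
    rcases eq_or_ne i j with rfl | h
    · exact ⟨1, by simp⟩
    · exact ⟨0, by simp [Pi.single_apply, h]⟩
  have := hw _ hz
  rwa [bform_E6, dotProduct_single, mul_one] at this

lemma fwd_mem {x : It → ℚ} (hx : x ∈ stdLat It) : Mq *ᵥ x ∈ L2' := by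
  have hu : ∀ i, isIntQ (((E6bigq * Mq) *ᵥ x) i) :=
    isIntQ_mulVec hPint (mem_stdLat.mp hx)
  have hb : E6bigq *ᵥ (Mq *ᵥ x) = (E6bigq * Mq) *ᵥ x := Matrix.mulVec_mulVec _ _ _
  have hsum := (E6bigq_mulVec (Mq *ᵥ x)).symm.trans hb
  rw [mem_L2']
  refine ⟨fun i => ?_, fun i => ?_, mem_dual_E6 fun j => ?_⟩
  · have := congrFun hsum (Sum.inl i)
    simp only [Sum.elim_inl] at this
    show isIntQ ((Mq *ᵥ x) (Sum.inl i))
    rw [this]; exact hu _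
  · have := congrFun hsum (Sum.inr (Sum.inl i))
    simp only [Sum.elim_inr, Sum.elim_inl] at this
    show isIntQ ((Mq *ᵥ x) (Sum.inr (Sum.inl i)))
    rw [this]; exact hu _
  · have := congrFun hsum (Sum.inr (Sum.inr j))
    simp only [Sum.elim_inr] at this
    rw [this]; exact hu _

lemma bwd_mem {y : Kt → ℚ} (hy : y ∈ L2') : Miq *ᵥ y ∈ stdLat It := by
  rw [mem_L2'] at hy
  obtain ⟨h1, h2, h3⟩ := hy
  have hw : ∀ k, isIntQ ((E6bigq *ᵥ y) k) := by
    intro k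
    rw [E6bigq_mulVec]
    rcases k with i | k
    · exact h1 i
    · rcases k with i | j
      · exact h2 i
      · exact dual_E6_int h3 j
  have : Miq *ᵥ y = cq Sz *ᵥ (E6bigq *ᵥ y) := by
    rw [Matrix.mulVec_mulVec, hq5]
  rw [mem_stdLat, this]
  exact isIntQ_mulVec (fun i j => isIntQ_cq Sz i j) hw

lemma Mq_mulVec_zsmul (c : ℤ) (v : It → ℚ) : Mq *ᵥ (c • v) = c • (Mq *ᵥ v) := by
  rw [← Int.cast_smul_eq_zsmul ℚ c v, Matrix.mulVec_smul, Int.cast_smul_eq_zsmul]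

/-- The isometry as a `ℤ`-linear equivalence. -/
def eIso : (stdLat It) ≃ₗ[ℤ] L2' where
  toFun x := ⟨Mq *ᵥ x.1, fwd_mem x.2⟩
  map_add' x y := Subtype.ext (by
    show Mq *ᵥ (x.1 + y.1) = Mq *ᵥ x.1 + Mq *ᵥ y.1
    rw [Matrix.mulVec_add])
  map_smul' c x := Subtype.ext (by
    show Mq *ᵥ (c • x.1) = c • (Mq *ᵥ x.1)
    exact Mq_mulVec_zsmul c x.1)
  invFun y := ⟨Miq *ᵥ y.1, bwd_mem y.2⟩
  left_inv x := Subtype.ext (by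
    show Miq *ᵥ (Mq *ᵥ x.1) = x.1
    rw [Matrix.mulVec_mulVec, hq1, Matrix.one_mulVec])
  right_inv y := Subtype.ext (by
    show Mq *ᵥ (Miq *ᵥ y.1) = y.1
    rw [Matrix.mulVec_mulVec, hq2, Matrix.one_mulVec])

end Aux

/-- The even lattice `U ⊕ U(3) ⊕ A₂ ⊕ A₂ ⊕ A₂` of signature `(8,2)` is
isometric to the even lattice `U ⊕ U ⊕ E₆^∨(3)`. -/
theorem statement10 :
    Isometric (oplusF UQ (oplusF U3Q (oplusF A2Q (oplusF A2Q A2Q))))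
      (stdLat (Fin 2 ⊕ (Fin 2 ⊕ (Fin 2 ⊕ (Fin 2 ⊕ Fin 2)))))
      (oplusF UQ (oplusF UQ ((3 : ℚ) • E6Q)))
      (oplusL (stdLat (Fin 2))
        (oplusL (stdLat (Fin 2)) (dual E6Q (stdLat (Fin 6))))) := by
  refine ⟨eIso, ?_⟩
  intro x y
  show bform (oplusF UQ (oplusF UQ ((3 : ℚ) • E6Q))) (Mq *ᵥ x.1) (Mq *ᵥ y.1) = _
  rw [← cq_G2z, ← cq_G1z, bform_matrix, hq3]

end LatQ
end

section
/- Let p ≥ 5 be a prime and let L be a positive definite even lattice. If v, w ∈ L satisfy (v,v) = 2, (w,w) = 2p, and (w,x) ∈ pℤ for all x ∈ L, then (v,w) = 0. (Hence for p ≥ 5 the set of 2-roots and the set of 2p-reflective roots of L are orthogonal to each other: R(L) = R₁(L) ⊕ R₂(L).) -/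
open Matrix

namespace LatQ

/-- Let `p ≥ 5` be a prime and `L` a positive definite even lattice.
If `v, w ∈ L` satisfy `(v,v) = 2`, `(w,w) = 2p` and `(w,x) ∈ pℤ` for all `x ∈ L`,
then `(v,w) = 0`. -/
theorem statement18 (p : ℕ) (hp : p.Prime) (hp5 : 5 ≤ p) (n : ℕ)
    (G : Matrix (Fin n) (Fin n) ℤ) (hsymm : G.IsSymm)
    (heven : ∀ v : Fin n → ℤ, ∃ m : ℤ, v ⬝ᵥ G *ᵥ v = 2 * m)
    (hpos : ∀ v : Fin n → ℤ, v ≠ 0 → 0 < v ⬝ᵥ G *ᵥ v)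
    (v w : Fin n → ℤ) (hv : v ⬝ᵥ G *ᵥ v = 2) (hw : w ⬝ᵥ G *ᵥ w = 2 * p)
    (hwp : ∀ x : Fin n → ℤ, (p : ℤ) ∣ w ⬝ᵥ G *ᵥ x) :
    v ⬝ᵥ G *ᵥ w = 0 := by
  obtain ⟨k, hk⟩ := hwp v
  have hGs : Gᵀ = G := hsymm
  have hsym : v ⬝ᵥ G *ᵥ w = w ⬝ᵥ G *ᵥ v := by
    rw [Matrix.dotProduct_mulVec, ← hGs, Matrix.vecMul_transpose, dotProduct_comm, hGs]
  have hexp : (2 • v - k • w) ⬝ᵥ G *ᵥ (2 • v - k • w) = 8 - 2 * p * k ^ 2 := by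
    have : (2 • v - k • w) ⬝ᵥ G *ᵥ (2 • v - k • w) =
        4 * (v ⬝ᵥ G *ᵥ v) - 2 * k * (v ⬝ᵥ G *ᵥ w) - 2 * k * (w ⬝ᵥ G *ᵥ v)
          + k ^ 2 * (w ⬝ᵥ G *ᵥ w) := by
      simp only [Matrix.mulVec_sub, Matrix.mulVec_smul, dotProduct_sub,
        sub_dotProduct, dotProduct_smul, smul_dotProduct, smul_eq_mul]
      ring
    rw [this, hv, hw, hsym, hk]; ring
  have hle : 0 ≤ 8 - 2 * (p : ℤ) * k ^ 2 := by
    rcases eq_or_ne (2 • v - k • w) 0 with h0 | h0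
    · rw [← hexp, h0]; simp
    · exact le_of_lt (hexp ▸ hpos _ h0)
  have hp5' : (5 : ℤ) ≤ (p : ℤ) := by exact_mod_cast hp5
  have hk0 : k = 0 := by
    by_contra h
    have h1 : 1 ≤ k ^ 2 := by
      have := Int.one_le_abs h
      nlinarith [sq_abs k]
    nlinarith
  rw [hsym, hk, hk0, mul_zero]

end LatQ
end
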